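/- Every d-regular bipartite graph (with finitely many vertices) admits a partition of its edge set into d pairwise disjoint perfect matchings; equivalently, its edges can be properly colored with exactly d colors. -/

import Mathlib

open Finset

/-- Hall's condition and one-side injection for a regular bipartite graph. -/
lemma regular_bip_exists_inj {V : Type*} [Fintype V] [DecidableEq V]
    (G : SimpleGraph V) [DecidableRel G.Adj] {d : ℕ} (hd : 0 < d)
    (hreg : G.IsRegularOfDegree d) (c : G.Coloring (Fin 2)) (i : Fin 2) :
    ∃ f : {v : V // c v = i} → V, Function.Injective f ∧
      ∀ x, f x ∈ G.neighborFinset x.val := by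
  refine (Finset.all_card_le_biUnion_card_iff_existsInjective'
    (fun a : {v : V // c v = i} => G.neighborFinset a.val)).mp ?_
  intro s
  set U := s.biUnion fun a => G.neighborFinset a.val with hU
  have key : d * #s ≤ d * #U := by
    have h1 : #(s.sigma fun a => G.neighborFinset a.val) ≤
        #(U.sigma fun b => G.neighborFinset b) := by
      apply Finset.card_le_card_of_injOn (fun p => ⟨p.2, p.1.1⟩)
      · rintro ⟨a, b⟩ hp
        simp only [Finset.mem_coe, Finset.mem_sigma] at hp ⊢
        refine ⟨Finset.mem_biUnion.mpr ⟨a, hp.1, hp.2⟩, ?_⟩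
        rw [SimpleGraph.mem_neighborFinset] at hp ⊢
        exact hp.2.symm
      · rintro ⟨a, b⟩ hp ⟨a', b'⟩ hp' h
        obtain ⟨h1, h2⟩ := Sigma.mk.inj_iff.mp h
        have ha : a = a' := Subtype.ext (eq_of_heq h2)
        subst ha
        subst h1
        rfl
    rw [Finset.card_sigma, Finset.card_sigma] at h1
    calc d * #s = ∑ a ∈ s, d := by rw [Finset.sum_const, smul_eq_mul, mul_comm]
    _ = ∑ a ∈ s, #(G.neighborFinset a.val) := by
        refine Finset.sum_congr rfl fun a _ => ?_
        rw [SimpleGraph.card_neighborFinset_eq_degree, hreg a.val]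
    _ ≤ ∑ b ∈ U, #(G.neighborFinset b) := h1
    _ = ∑ b ∈ U, d := by
        refine Finset.sum_congr rfl fun b _ => ?_
        rw [SimpleGraph.card_neighborFinset_eq_degree, hreg b]
    _ = d * #U := by rw [Finset.sum_const, smul_eq_mul, mul_comm]
  exact Nat.le_of_mul_le_mul_left key hd

/-- A positive-degree regular bipartite graph has a perfect matching. -/
lemma regular_bip_exists_pm {V : Type*} [Fintype V] [DecidableEq V]
    (G : SimpleGraph V) [DecidableRel G.Adj] {d : ℕ} (hd : 0 < d)
    (hreg : G.IsRegularOfDegree d) (hbip : G.Colorable 2) :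
    ∃ M : Set (Sym2 V), M ⊆ G.edgeSet ∧ ∀ v : V, ∃! e : Sym2 V, e ∈ M ∧ v ∈ e := by
  obtain ⟨c⟩ := hbip
  have hcol : ∀ {v w : V}, G.Adj v w → c v = 0 → c w = 1 := by
    intro v w h hv
    have := c.valid h
    rw [hv] at this
    omega
  have hcol' : ∀ {v w : V}, G.Adj v w → c v = 1 → c w = 0 := by
    intro v w h hv
    have := c.valid h
    rw [hv] at this
    omega
  obtain ⟨f, hfinj, hfadj⟩ := regular_bip_exists_inj G hd hreg c 0
  obtain ⟨g, hginj, hgadj⟩ := regular_bip_exists_inj G hd hreg c 1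
  -- f maps the 0-side into the 1-side
  have hf1 : ∀ a : {v : V // c v = 0}, c (f a) = 1 := fun a =>
    hcol ((SimpleGraph.mem_neighborFinset _ _ _).mp (hfadj a)) a.2
  have hg0 : ∀ b : {v : V // c v = 1}, c (g b) = 0 := fun b =>
    hcol' ((SimpleGraph.mem_neighborFinset _ _ _).mp (hgadj b)) b.2
  set fB : {v : V // c v = 0} → {v : V // c v = 1} := fun a => ⟨f a, hf1 a⟩ with hfB
  have hfBinj : Function.Injective fB := fun a a' h =>
    hfinj (congrArg Subtype.val h)
  set gB : {v : V // c v = 1} → {v : V // c v = 0} := fun b => ⟨g b, hg0 b⟩ with hgB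
  have hgBinj : Function.Injective gB := fun a a' h =>
    hginj (congrArg Subtype.val h)
  have hcard : Fintype.card {v : V // c v = 0} = Fintype.card {v : V // c v = 1} :=
    le_antisymm (Fintype.card_le_of_injective _ hfBinj)
      (Fintype.card_le_of_injective _ hgBinj)
  have hfBbij : Function.Bijective fB :=
    (Fintype.bijective_iff_injective_and_card fB).mpr ⟨hfBinj, hcard⟩
  refine ⟨{e | ∃ a : {v : V // c v = 0}, e = s(a.val, f a)}, ?_, ?_⟩
  · rintro e ⟨a, rfl⟩
    exact (SimpleGraph.mem_neighborFinset _ _ _).mp (hfadj a)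
  · intro v
    have hv01 : c v = 0 ∨ c v = 1 := by omega
    rcases hv01 with hv | hv
    · refine ⟨s(v, f ⟨v, hv⟩), ⟨⟨⟨v, hv⟩, rfl⟩, by simp⟩, ?_⟩
      rintro e ⟨⟨a, rfl⟩, hve⟩
      rw [Sym2.mem_iff] at hve
      rcases hve with rfl | rfl
      · rfl
      · exact absurd (hf1 a) (by rw [hv]; omega)
    · obtain ⟨a, ha⟩ := hfBbij.2 ⟨v, hv⟩
      have hav : f a = v := congrArg Subtype.val ha
      refine ⟨s(a.val, f a), ⟨⟨a, rfl⟩, by rw [hav]; simp⟩, ?_⟩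
      rintro e ⟨⟨a', rfl⟩, hve⟩
      rw [Sym2.mem_iff] at hve
      rcases hve with rfl | hva
      · exact absurd a'.2 (by rw [hv] at *; omega)
      · have : fB a' = fB a := by
          apply Subtype.ext
          rw [hfB]
          exact hva.symm.trans hav.symm
        rw [hfBinj this]

lemma regular_bip_aux {V : Type*} [Fintype V] [DecidableEq V] :
    ∀ (d : ℕ) (G : SimpleGraph V) [DecidableRel G.Adj],
      G.IsRegularOfDegree d → G.Colorable 2 →
      ∃ M : Fin d → Set (Sym2 V),
        (∀ i, M i ⊆ G.edgeSet) ∧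
        (Pairwise fun i j => Disjoint (M i) (M j)) ∧
        (⋃ i, M i) = G.edgeSet ∧
        (∀ i, ∀ v : V, ∃! e : Sym2 V, e ∈ M i ∧ v ∈ e) := by
  intro d
  induction d with
  | zero =>
    intro G _ hreg _
    refine ⟨fun i => i.elim0, fun i => i.elim0, fun i => i.elim0, ?_, fun i => i.elim0⟩
    rw [Set.iUnion_of_empty]
    symm
    rw [Set.eq_empty_iff_forall_notMem]
    intro e he
    induction e with
    | h a b =>
      rw [SimpleGraph.mem_edgeSet] at he
      have hb : b ∈ G.neighborFinset a := (SimpleGraph.mem_neighborFinset _ _ _).mpr he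
      have : G.degree a = 0 := hreg a
      rw [← SimpleGraph.card_neighborFinset_eq_degree, Finset.card_eq_zero] at this
      simp [this] at hb
  | succ d ih =>
    intro G _ hreg hbip
    obtain ⟨M₀, hM₀sub, hM₀pm⟩ := regular_bip_exists_pm G (Nat.succ_pos d) hreg hbip
    set G' := G.deleteEdges M₀ with hG'
    letI : DecidableRel G'.Adj := Classical.decRel _
    have hG'le : G' ≤ G := SimpleGraph.deleteEdges_le _
    have hG'edge : G'.edgeSet = G.edgeSet \ M₀ := SimpleGraph.edgeSet_deleteEdges _
    -- G' is d-regular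
    have hreg' : G'.IsRegularOfDegree d := by
      intro v
      obtain ⟨e, ⟨heM, hve⟩, huniq⟩ := hM₀pm v
      obtain ⟨w, rfl⟩ := Sym2.mem_iff_exists.mp hve
      have hadj : G.Adj v w := (G.mem_edgeSet).mp (hM₀sub heM)
      have hNF : G'.neighborFinset v = (G.neighborFinset v).erase w := by
        ext u
        simp only [SimpleGraph.mem_neighborFinset, Finset.mem_erase, hG',
          SimpleGraph.deleteEdges_adj]
        constructor
        · rintro ⟨hadj', hnot⟩
          refine ⟨fun huw => hnot ?_, hadj'⟩
          rw [huw]; exact heM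
        · rintro ⟨hne, hadj'⟩
          refine ⟨hadj', fun hmem => hne ?_⟩
          have := huniq s(v, u) ⟨hmem, by simp⟩
          have h2 : u ∈ s(v, w) := this ▸ (Sym2.mem_mk_right v u)
          rcases Sym2.mem_iff.mp h2 with h | h
          · exact absurd (h ▸ hadj') (G.loopless.irrefl v)
          · exact h
      rw [← SimpleGraph.card_neighborFinset_eq_degree, hNF, Finset.card_erase_of_mem
        ((SimpleGraph.mem_neighborFinset _ _ _).mpr hadj),
        SimpleGraph.card_neighborFinset_eq_degree, hreg v]
      omega
    -- G' is bipartite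
    have hbip' : G'.Colorable 2 := by
      obtain ⟨c⟩ := hbip
      exact ⟨⟨c, fun h => c.valid (hG'le h)⟩⟩
    obtain ⟨M', hM'sub, hM'disj, hM'union, hM'pm⟩ := ih G' hreg' hbip'
    have hdisj0 : ∀ j, Disjoint M₀ (M' j) := by
      intro j
      rw [Set.disjoint_left]
      intro e heM₀ heM'
      exact (hG'edge ▸ hM'sub j heM').2 heM₀
    refine ⟨Fin.cons M₀ M', ?_, ?_, ?_, ?_⟩
    · intro i
      refine Fin.cases ?_ ?_ i
      · simpa using hM₀sub
      · intro j
        rw [Fin.cons_succ]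
        exact (hM'sub j).trans (hG'edge ▸ Set.diff_subset)
    · intro i j hij
      rcases Fin.eq_zero_or_eq_succ i with rfl | ⟨i', rfl⟩ <;>
        rcases Fin.eq_zero_or_eq_succ j with rfl | ⟨j', rfl⟩
      · exact absurd rfl hij
      · simpa using hdisj0 j'
      · simpa using (hdisj0 i').symm
      · simpa using hM'disj (fun h => hij (by rw [h]))
    · ext e
      simp only [Set.mem_iUnion]
      rw [Fin.exists_fin_succ]
      simp only [Fin.cons_zero, Fin.cons_succ]
      constructor
      · rintro (h | ⟨i, h⟩)
        · exact hM₀sub h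
        · exact (hG'edge ▸ hM'sub i h).1
      · intro he
        by_cases h0 : e ∈ M₀
        · exact Or.inl h0
        · right
          have : e ∈ G'.edgeSet := hG'edge ▸ ⟨he, h0⟩
          rw [← hM'union] at this
          exact Set.mem_iUnion.mp this
    · intro i v
      refine Fin.cases ?_ ?_ i
      · simpa using hM₀pm v
      · intro j
        simpa using hM'pm j v

/-- Every `d`-regular bipartite graph on finitely many vertices admits a partition of
its edge set into `d` pairwise disjoint perfect matchings. -/
theorem regular_bipartite_edge_coloring {V : Type*} [Fintype V] [DecidableEq V]
    (G : SimpleGraph V) [DecidableRel G.Adj] (d : ℕ)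
    (hreg : G.IsRegularOfDegree d) (hbip : G.Colorable 2) :
    ∃ M : Fin d → Set (Sym2 V),
      (∀ i, M i ⊆ G.edgeSet) ∧
      (Pairwise fun i j => Disjoint (M i) (M j)) ∧
      (⋃ i, M i) = G.edgeSet ∧
      (∀ i, ∀ v : V, ∃! e : Sym2 V, e ∈ M i ∧ v ∈ e) := by
  exact regular_bip_aux d G hreg hbip
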